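/- Let C be a binary linear [n,k] code with redundancy r = n−k and minimum distance d_min ≤ d_0 ≤ r. Then the ML decoding block error probability over the BEC with erasure probability ε satisfies P_e ≥ Σ_{i=r+1}^{n} C(n,i) ε^i (1−ε)^{n−i} + Σ_{w=d_0}^{r} C(n−d_0, w−d_0) ε^w (1−ε)^{n−w}. -/

import Mathlib

open Finset

private lemma rank_lt_of_kernel {r n : ℕ} (H : Matrix (Fin r) (Fin n) (ZMod 2))
    (I : Finset (Fin n)) (c : Fin n → ZMod 2) (hc0 : c ≠ 0)
    (hHc : H.mulVec c = 0) (hsupp : ∀ j, c j ≠ 0 → j ∈ I) :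
    (H.submatrix id (fun j : {x // x ∈ I} => (j : Fin n))).rank < I.card := by
  classical
  set M := H.submatrix id (fun j : {x // x ∈ I} => (j : Fin n)) with hM
  set x : {x // x ∈ I} → ZMod 2 := fun j => c j.1 with hx
  have hx0 : x ≠ 0 := by
    obtain ⟨j, hj⟩ := Function.ne_iff.mp hc0
    have hjI := hsupp j (by simpa using hj)
    intro h
    exact hj (by simpa [hx] using congrFun h ⟨j, hjI⟩)
  have hker : M.mulVec x = 0 := by
    funext i
    have hfull := congrFun hHc i
    simp only [Matrix.mulVec, dotProduct, Pi.zero_apply] at hfull ⊢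
    have h1 : ∑ j : {x // x ∈ I}, M i j * x j = ∑ j ∈ I, H i j * c j := by
      rw [← Finset.sum_attach I (fun j => H i j * c j)]
      rfl
    have h2 : ∑ j ∈ I, H i j * c j = ∑ j : Fin n, H i j * c j := by
      apply Finset.sum_subset (Finset.subset_univ I)
      intro j _ hj
      by_cases hcj : c j = 0
      · simp [hcj]
      · exact absurd (hsupp j hcj) hj
    rw [h1, h2, hfull]
  have hrank := LinearMap.finrank_range_add_finrank_ker M.mulVecLin
  have hdom : Module.finrank (ZMod 2) ({x // x ∈ I} → ZMod 2) = I.card := by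
    rw [Module.finrank_fintype_fun_eq_card, Fintype.card_coe]
  have hkpos : 0 < Module.finrank (ZMod 2) (LinearMap.ker M.mulVecLin) := by
    rw [Module.finrank_pos_iff_exists_ne_zero]
    refine ⟨⟨x, ?_⟩, ?_⟩
    · simpa [Matrix.mulVecLin] using hker
    · simpa [Submodule.mk_eq_zero] using hx0
  rw [hdom] at hrank
  rw [Matrix.rank]
  omega

private lemma count_supersets {n d₀ w : ℕ} (S : Finset (Fin n)) (hS : S.card = d₀)
    (hdw : d₀ ≤ w) :
    (((univ : Finset (Fin n)).powersetCard w).filter (fun I => S ⊆ I)).card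
      = (n - d₀).choose (w - d₀) := by
  classical
  have hcard : ((univ \ S).powersetCard (w - d₀)).card = (n - d₀).choose (w - d₀) := by
    rw [Finset.card_powersetCard, Finset.card_sdiff_of_subset (Finset.subset_univ S),
      Finset.card_univ, Fintype.card_fin, hS]
  rw [← hcard]
  apply Finset.card_bij' (fun I _ => I \ S) (fun T _ => S ∪ T)
  · intro I hI
    simp only [Finset.mem_filter, Finset.mem_powersetCard] at hI
    obtain ⟨⟨_, hIw⟩, hSI⟩ := hI
    rw [Finset.mem_powersetCard]
    constructor
    · exact Finset.sdiff_subset_sdiff (Finset.subset_univ I) (le_refl S)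
    · rw [Finset.card_sdiff_of_subset hSI, hIw, hS]
  · intro T hT
    rw [Finset.mem_powersetCard] at hT
    obtain ⟨hTsub, hTcard⟩ := hT
    have hdisj : Disjoint S T := by
      refine Finset.disjoint_left.mpr fun a haS haT => ?_
      exact (Finset.mem_sdiff.mp (hTsub haT)).2 haS
    rw [Finset.mem_filter, Finset.mem_powersetCard]
    refine ⟨⟨Finset.subset_univ _, ?_⟩, Finset.subset_union_left⟩
    rw [Finset.card_union_of_disjoint hdisj, hS, hTcard]
    omega
  · intro I hI
    simp only [Finset.mem_filter] at hI
    exact Finset.union_sdiff_of_subset hI.2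
  · intro T hT
    rw [Finset.mem_powersetCard] at hT
    have hdisj : Disjoint S T := by
      refine Finset.disjoint_left.mpr fun a haS haT => ?_
      exact (Finset.mem_sdiff.mp (hT.1 haT)).2 haS
    exact Finset.union_sdiff_cancel_left hdisj

/-- Tightened lower bound: for a binary linear `[n,k]` code with redundancy
`r = n - k` and minimum distance at most `d₀ ≤ r` (witnessed by a nonzero
codeword of weight at most `d₀`), the ML block error probability over the BEC
with erasure probability `ε` satisfies
`P_e ≥ ∑_{i=r+1}^{n} C(n,i) ε^i (1-ε)^(n-i) + ∑_{w=d₀}^{r} C(n-d₀, w-d₀) ε^w (1-ε)^(n-w)`. -/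
theorem bec_ml_error_tightened_lower_bound (n k r d₀ : ℕ) (hk : k ≤ n) (hr : r = n - k)
    (hd₀r : d₀ ≤ r)
    (H : Matrix (Fin r) (Fin n) (ZMod 2))
    (hdmin : ∃ c : Fin n → ZMod 2, c ≠ 0 ∧ H.mulVec c = 0 ∧
      (Finset.univ.filter (fun i => c i ≠ 0)).card ≤ d₀)
    (ε : ℝ) (hε0 : 0 < ε) (hε1 : ε < 1) :
    (∑ i ∈ Finset.Icc (r + 1) n, (n.choose i : ℝ) * ε ^ i * (1 - ε) ^ (n - i))
      + ∑ w ∈ Finset.Icc d₀ r, ((n - d₀).choose (w - d₀) : ℝ) * ε ^ w * (1 - ε) ^ (n - w)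
    ≤ ∑ I : Finset (Fin n),
        (if (H.submatrix id (fun j : {x // x ∈ I} => (j : Fin n))).rank < I.card
          then ε ^ I.card * (1 - ε) ^ (n - I.card) else 0) := by
  classical
  obtain ⟨c, hc0, hHc, hcw⟩ := hdmin
  have hrn : r ≤ n := by omega
  have hd₀n : d₀ ≤ n := le_trans hd₀r hrn
  obtain ⟨S, hcS, hScard⟩ := Finset.exists_superset_card_eq hcw
    (by rw [Fintype.card_fin]; exact hd₀n)
  set p : ℕ → ℝ := fun i => ε ^ i * (1 - ε) ^ (n - i) with hp
  have hp0 : ∀ i, 0 ≤ p i := fun i => by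
    apply mul_nonneg (pow_nonneg hε0.le _) (pow_nonneg (by linarith) _)
  set A : Finset (Finset (Fin n)) := univ.filter (fun I => r < I.card) with hA
  set B : Finset (Finset (Fin n)) := univ.filter (fun I => S ⊆ I ∧ I.card ≤ r) with hB
  have hAB : Disjoint A B := by
    refine Finset.disjoint_left.mpr fun I hIA hIB => ?_
    simp only [hA, hB, Finset.mem_filter] at hIA hIB
    omega
  -- every I in A ∪ B is a failure pattern
  have hfail : ∀ I ∈ A ∪ B,
      (H.submatrix id (fun j : {x // x ∈ I} => (j : Fin n))).rank < I.card := by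
    intro I hI
    rcases Finset.mem_union.mp hI with hIA | hIB
    · simp only [hA, Finset.mem_filter] at hIA
      calc (H.submatrix id (fun j : {x // x ∈ I} => (j : Fin n))).rank
          ≤ Fintype.card (Fin r) := Matrix.rank_le_card_height _
        _ = r := Fintype.card_fin r
        _ < I.card := hIA.2
    · simp only [hB, Finset.mem_filter] at hIB
      exact rank_lt_of_kernel H I c hc0 hHc (fun j hj =>
        hIB.2.1 (hcS (by simp [hj])))
  -- sum over A
  have hsumA : ∑ i ∈ Finset.Icc (r + 1) n, (n.choose i : ℝ) * ε ^ i * (1 - ε) ^ (n - i)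
      = ∑ I ∈ A, p I.card := by
    have hAeq : A = (Finset.Icc (r + 1) n).biUnion
        (fun i => (univ : Finset (Fin n)).powersetCard i) := by
      ext I
      simp only [hA, Finset.mem_filter, Finset.mem_biUnion, Finset.mem_Icc,
        Finset.mem_powersetCard, Finset.mem_univ, true_and]
      constructor
      · intro hI
        exact ⟨I.card, ⟨hI, by simpa using Finset.card_le_univ I⟩,
          Finset.subset_univ I, rfl⟩
      · rintro ⟨i, ⟨h1, _⟩, _, rfl⟩; exact h1
    rw [hAeq, Finset.sum_biUnion]
    · apply Finset.sum_congr rfl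
      intro i _
      rw [Finset.sum_congr rfl (fun I hI => by
        rw [(Finset.mem_powersetCard.mp hI).2]),
        Finset.sum_const, Finset.card_powersetCard, Finset.card_univ, Fintype.card_fin,
        nsmul_eq_mul, hp, mul_assoc]
    · intro i _ j _ hij
      refine Finset.disjoint_left.mpr fun I hIi hIj => ?_
      rw [Finset.mem_powersetCard] at hIi hIj
      exact hij (hIi.2 ▸ hIj.2)
  -- sum over B
  have hsumB : ∑ w ∈ Finset.Icc d₀ r,
      ((n - d₀).choose (w - d₀) : ℝ) * ε ^ w * (1 - ε) ^ (n - w)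
      = ∑ I ∈ B, p I.card := by
    have hBeq : B = (Finset.Icc d₀ r).biUnion
        (fun w => ((univ : Finset (Fin n)).powersetCard w).filter (fun I => S ⊆ I)) := by
      ext I
      simp only [hB, Finset.mem_filter, Finset.mem_biUnion, Finset.mem_Icc,
        Finset.mem_powersetCard, Finset.mem_univ, true_and]
      constructor
      · rintro ⟨hSI, hIr⟩
        exact ⟨I.card, ⟨hScard ▸ Finset.card_le_card hSI, hIr⟩,
          ⟨Finset.subset_univ I, rfl⟩, hSI⟩
      · rintro ⟨w, ⟨_, hwr⟩, ⟨_, rfl⟩, hSI⟩; exact ⟨hSI, hwr⟩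
    rw [hBeq, Finset.sum_biUnion]
    · apply Finset.sum_congr rfl
      intro w hw
      rw [Finset.mem_Icc] at hw
      rw [Finset.sum_congr rfl (fun I hI => by
        rw [(Finset.mem_powersetCard.mp (Finset.mem_filter.mp hI).1).2]),
        Finset.sum_const, count_supersets S hScard hw.1, nsmul_eq_mul, hp, mul_assoc]
    · intro i _ j _ hij
      refine Finset.disjoint_left.mpr fun I hIi hIj => ?_
      rw [Finset.mem_filter, Finset.mem_powersetCard] at hIi hIj
      exact hij (hIi.1.2 ▸ hIj.1.2)
  rw [hsumA, hsumB, ← Finset.sum_union hAB]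
  calc ∑ I ∈ A ∪ B, p I.card
      = ∑ I ∈ A ∪ B,
        (if (H.submatrix id (fun j : {x // x ∈ I} => (j : Fin n))).rank < I.card
          then ε ^ I.card * (1 - ε) ^ (n - I.card) else 0) := by
        apply Finset.sum_congr rfl
        intro I hI
        rw [if_pos (hfail I hI)]
    _ ≤ _ := by
        apply Finset.sum_le_sum_of_subset_of_nonneg (Finset.subset_univ _)
        intro I _ _
        split
        · exact hp0 I.card
        · exact le_refl 0
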